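/- Let f : ℝ → ℝ be continuous and let u be a solution of the radial equation on an interval J ⊆ (0,∞). Then the energy r ↦ I(r) = |u'(r)|^m/m' + F(u(r)) is differentiable on J with I'(r) = −((N−1)/r)·|u'(r)|^m for every r ∈ J; in particular I is nonincreasing on J. -/

import Mathlib

open Set Filter MeasureTheory

noncomputable def phim (m x : ℝ) : ℝ := |x| ^ (m - 2) * x

noncomputable def Fint (f : ℝ → ℝ) (s : ℝ) : ℝ := ∫ t in (0:ℝ)..s, f t

noncomputable def Qfun (N m : ℝ) (f : ℝ → ℝ) (s : ℝ) : ℝ :=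
  m * N * Fint f s - (N - m) * s * f s

/-- `u` (with derivative function `u'`) is a solution of the radial quasilinear
equation on the set `J`. -/
def IsSolutionOn (N m : ℝ) (f : ℝ → ℝ) (J : Set ℝ) (u u' : ℝ → ℝ) : Prop :=
  (∀ r ∈ J, HasDerivWithinAt u (u' r) J r) ∧ ContinuousOn u' J ∧
    ∃ w' : ℝ → ℝ,
      (∀ r ∈ J ∩ Set.Ioi (0:ℝ),
        HasDerivWithinAt (fun t => phim m (u' t)) (w' r) (J ∩ Set.Ioi (0:ℝ)) r) ∧
      ContinuousOn w' (J ∩ Set.Ioi (0:ℝ)) ∧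
      ∀ r ∈ J ∩ Set.Ioi (0:ℝ), w' r + ((N - 1) / r) * phim m (u' r) + f (u r) = 0

def IsIVPSolutionOn (N m : ℝ) (f : ℝ → ℝ) (α : ℝ) (J : Set ℝ) (u u' : ℝ → ℝ) : Prop :=
  IsSolutionOn N m f J u u' ∧ u 0 = α ∧ u' 0 = 0

/-- Admissible domains for the IVP: `[0,∞)` or `[0,R)` with `0 < R`. -/
def IVPDomain (J : Set ℝ) : Prop :=
  J = Set.Ici (0:ℝ) ∨ ∃ R : ℝ, 0 < R ∧ J = Set.Ico (0:ℝ) R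

/-- The solution `u` of the IVP on `J` cannot be extended to a solution on a
strictly larger admissible domain. -/
def Noncontinuable (N m : ℝ) (f : ℝ → ℝ) (α : ℝ) (J : Set ℝ) (u u' : ℝ → ℝ) : Prop :=
  ∀ J' : Set ℝ, IVPDomain J' → J ⊂ J' →
    ¬ ∃ v v' : ℝ → ℝ, IsIVPSolutionOn N m f α J' v v' ∧ Set.EqOn v u J ∧ Set.EqOn v' u' J

open Classical in
/-- The filter describing the approach to the right endpoint of an IVP domain. -/
noncomputable def domEnd (J : Set ℝ) : Filter ℝ :=
  if J = Set.Ici (0:ℝ) then Filter.atTop else nhdsWithin (sSup J) (Set.Iio (sSup J))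

def LocLipschitzOn (f : ℝ → ℝ) (S : Set ℝ) : Prop :=
  ∀ x ∈ S, ∃ ε : ℝ, 0 < ε ∧ ∃ K : NNReal, LipschitzOnWith K f (Metric.ball x ε ∩ S)

/-- Assumption (f₂). -/
structure Hf2 (f : ℝ → ℝ) (βm βp : ℝ) (γm γp : EReal) : Prop where
  hβm : βm < 0
  hβp : 0 < βp
  hFneg : ∀ s : ℝ, s ∈ Set.Ioo βm βp → s ≠ 0 → Fint f s < 0
  hFβm : Fint f βm = 0
  hFβp : Fint f βp = 0
  hγp : (βp : EReal) < γp
  hγm : γm < (βm : EReal)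
  hfpos : ∀ s : ℝ, βp < s → (s : EReal) < γp → 0 < f s
  hfneg : ∀ s : ℝ, γm < (s : EReal) → s < βm → f s < 0
  hγpzero : ∀ s : ℝ, (s : EReal) = γp → f s = 0
  hγmzero : ∀ s : ℝ, (s : EReal) = γm → f s = 0
  hlim : ∃ L : EReal,
    Filter.Tendsto (fun s : ℝ => (Fint f s : EReal))
      (Filter.comap Real.toEReal (nhdsWithin γp (Set.Iio γp))) (nhds L) ∧
    Filter.Tendsto (fun s : ℝ => (Fint f s : EReal))
      (Filter.comap Real.toEReal (nhdsWithin γm (Set.Ioi γm))) (nhds L)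
  hlip : LocLipschitzOn f {s : ℝ | (γm < (s : EReal) ∧ s < 0) ∨ (0 < s ∧ (s : EReal) < γp)}

/-- Assumption (f₃). -/
def Hf3 (N m : ℝ) (f : ℝ → ℝ) (βm βp : ℝ) (γm γp : EReal) : Prop :=
  (γp = ⊤ →
    (∃ βb : ℝ, βp < βb ∧ ∀ s : ℝ, βb ≤ s → 0 ≤ Qfun N m f s) ∧
    (∃ θ : ℝ, θ ∈ Set.Ioo (0:ℝ) 1 ∧
      Filter.Tendsto (fun s : ℝ =>
        sInf ((fun p : ℝ × ℝ =>
          Qfun N m f p.2 * ((|s| ^ (m - 2) * s) / f p.1) ^ (N / m)) ''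
            (Set.Icc (θ * s) s ×ˢ Set.Icc (θ * s) s)))
        Filter.atTop Filter.atTop)) ∧
  (γm = ⊥ →
    (∃ βb : ℝ, -βb < βm ∧ ∀ s : ℝ, s ≤ -βb → 0 ≤ Qfun N m f s) ∧
    (∃ θ : ℝ, θ ∈ Set.Ioo (0:ℝ) 1 ∧
      Filter.Tendsto (fun s : ℝ =>
        sInf ((fun p : ℝ × ℝ =>
          Qfun N m f p.2 * ((|s| ^ (m - 2) * s) / f p.1) ^ (N / m)) ''
            (Set.Icc s (θ * s) ×ˢ Set.Icc s (θ * s))))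
        Filter.atBot Filter.atTop))

/-- Assumption (f₄). -/
def Hf4 (N m : ℝ) (f : ℝ → ℝ) (βm βp : ℝ) (γm γp : EReal) : Prop :=
  (γp ≠ ⊤ → ∃ L₀ : ℝ, 0 < L₀ ∧ ∃ βb : ℝ, βp < βb ∧
    ∀ s : ℝ, βb ≤ s → (s : EReal) < γp → f s ≤ L₀ * (γp.toReal - s) ^ (m - 1)) ∧
  (γm ≠ ⊥ → ∃ L₀ : ℝ, 0 < L₀ ∧ ∃ βb : ℝ, -βm < βb ∧
    ∀ s : ℝ, γm < (s : EReal) → s ≤ -βb → -f s ≤ L₀ * (s - γm.toReal) ^ (m - 1))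

lemma abs_phim {m : ℝ} (hm : 1 < m) (v : ℝ) : |phim m v| = |v| ^ (m - 1) := by
  rcases eq_or_ne v 0 with rfl | hv
  · simp [phim, Real.zero_rpow (by linarith : m - 1 ≠ 0)]
  · have h : |v| ≠ 0 := abs_ne_zero.mpr hv
    rw [phim, abs_mul, abs_of_nonneg (Real.rpow_nonneg (abs_nonneg v) _),
      show m - 1 = (m - 2) + 1 by ring, Real.rpow_add_one h]

lemma abs_phim_rpow {m : ℝ} (hm : 1 < m) (v : ℝ) :
    |phim m v| ^ (m / (m - 1)) = |v| ^ m := by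
  rw [abs_phim hm, ← Real.rpow_mul (abs_nonneg v)]
  congr 1
  rw [mul_comm]; exact div_mul_cancel₀ m (by linarith : m - 1 ≠ 0)

lemma phim_inv {m : ℝ} (hm : 1 < m) (v : ℝ) :
    phim (m / (m - 1)) (phim m v) = v := by
  rcases eq_or_ne v 0 with rfl | hv
  · simp [phim]
  · have h : |v| ≠ 0 := abs_ne_zero.mpr hv
    rw [phim, abs_phim hm, ← Real.rpow_mul (abs_nonneg v), phim, ← mul_assoc,
      ← Real.rpow_add (abs_pos.mpr hv),
      show (m - 1) * (m / (m - 1) - 2) + (m - 2) = 0 by rw [mul_sub, mul_div_cancel₀ _ (by linarith : m - 1 ≠ 0)]; ring,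
      Real.rpow_zero, one_mul]

lemma mul_phim {m : ℝ} (hm : 1 < m) (v : ℝ) : v * phim m v = |v| ^ m := by
  rcases eq_or_ne v 0 with rfl | hv
  · simp [phim, Real.zero_rpow (by linarith : m ≠ 0)]
  · have h : (0:ℝ) < |v| := abs_pos.mpr hv
    rw [phim, show v * (|v| ^ (m-2) * v) = |v| ^ (m-2) * (v * v) by ring,
      show v * v = |v| ^ (2:ℝ) by rw [Real.rpow_two, sq_abs, sq],
      ← Real.rpow_add h]
    norm_num

lemma hasDerivAt_Fint {f : ℝ → ℝ} (hf : Continuous f) (s : ℝ) :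
    HasDerivAt (Fint f) (f s) s :=
  (hf.integral_hasStrictDerivAt 0 s).hasDerivAt

/-- the energy `I(r) = |u'(r)|^m/m' + F(u(r))` is differentiable with
`I'(r) = -((N-1)/r)|u'(r)|^m`; in particular `I` is nonincreasing. -/
theorem energy_derivative
    (N m : ℝ) (hm : 1 < m) (hNm : m ≤ N) (f : ℝ → ℝ) (hf : Continuous f)
    (J : Set ℝ) (hJc : J.OrdConnected) (hJ0 : J ⊆ Set.Ioi (0:ℝ))
    (u u' : ℝ → ℝ) (hu : IsSolutionOn N m f J u u') :
    (∀ r ∈ J, HasDerivWithinAt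
        (fun t => |u' t| ^ m / (m / (m - 1)) + Fint f (u t))
        (-((N - 1) / r) * |u' r| ^ m) J r) ∧
    AntitoneOn (fun t => |u' t| ^ m / (m / (m - 1)) + Fint f (u t)) J := by
  have hm1 : (1:ℝ) < m / (m - 1) := (one_lt_div (by linarith)).mpr (by linarith)
  obtain ⟨hu1, hu'c, w', hw1, hw'c, heq⟩ := hu
  have hJJ : J ∩ Set.Ioi (0:ℝ) = J := Set.inter_eq_left.mpr hJ0
  rw [hJJ] at hw1 heq
  have key : ∀ r ∈ J, HasDerivWithinAt
      (fun t => |u' t| ^ m / (m / (m - 1)) + Fint f (u t))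
      (-((N - 1) / r) * |u' r| ^ m) J r := by
    intro r hr
    have hr0 : (0:ℝ) < r := hJ0 hr
    have hG : HasDerivAt (fun x : ℝ => |x| ^ (m / (m - 1)) / (m / (m - 1)))
        (phim (m / (m - 1)) (phim m (u' r))) (phim m (u' r)) := by
      have h := (hasDerivAt_abs_rpow (phim m (u' r)) hm1).div_const (m / (m - 1))
      refine h.congr_deriv (Eq.symm ?_)
      have hc : m / (m - 1) ≠ 0 := by positivity
      rw [phim, mul_assoc, mul_div_cancel_left₀ _ hc]
    have h1 : HasDerivWithinAt (fun t => |phim m (u' t)| ^ (m / (m - 1)) / (m / (m - 1)))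
        (phim (m / (m - 1)) (phim m (u' r)) * w' r) J r :=
      by have := hG.comp_hasDerivWithinAt r (hw1 r hr); exact this
    have e1 : (fun t => |phim m (u' t)| ^ (m / (m - 1)) / (m / (m - 1)))
        = (fun t => |u' t| ^ m / (m / (m - 1))) :=
      funext fun t => by rw [abs_phim_rpow hm]
    rw [e1, phim_inv hm] at h1
    have h2 : HasDerivWithinAt (fun t => Fint f (u t)) (f (u r) * u' r) J r :=
      (hasDerivAt_Fint hf (u r)).comp_hasDerivWithinAt r (hu1 r hr)
    have h3 := h1.add h2
    refine h3.congr_deriv (Eq.symm ?_)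
    have he := heq r hr
    have hw : w' r = -((N - 1) / r * phim m (u' r)) - f (u r) := by linarith
    rw [← mul_phim hm (u' r), hw]
    ring
  refine ⟨key, ?_⟩
  have hconv : Convex ℝ J := convex_iff_ordConnected.mpr hJc
  refine antitoneOn_of_hasDerivWithinAt_nonpos hconv
    (fun r hr => (key r hr).continuousWithinAt)
    (f' := fun r => -((N - 1) / r) * |u' r| ^ m)
    (fun x hx => (((key x (interior_subset hx)).hasDerivAt
      (mem_interior_iff_mem_nhds.mp hx)).hasDerivWithinAt)) ?_
  intro x hx
  have hx0 : (0:ℝ) < x := hJ0 (interior_subset hx)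
  exact mul_nonpos_of_nonpos_of_nonneg
    (neg_nonpos.mpr (div_nonneg (by linarith) hx0.le))
    (Real.rpow_nonneg (abs_nonneg _) m)
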